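/- Every cotransverse map f : {0,1}^m → {0,1}^n factors uniquely as f = φ ∘ ψ where ψ : {0,1}^m → {0,1}^m is cotransverse and φ : {0,1}^m → {0,1}^n belongs to the box category (is a composite of coface maps). -/

import Mathlib

open scoped ENNReal

open Classical in
noncomputable def dCube {n : ℕ} (x y : Fin n → Bool) : ℝ≥0∞ :=
  if x ≤ y then ((Finset.univ.filter fun i => x i ≠ y i).card : ℝ≥0∞) else ⊤

/-- Maps between binary cubes. -/
abbrev CubeMap (m n : ℕ) := (Fin m → Bool) → (Fin n → Bool)

/-- Cotransverse maps: strictly increasing poset maps preserving `d̄₁`-distance `1`. -/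
def Cotransverse {m n : ℕ} (f : CubeMap m n) : Prop :=
  StrictMono f ∧ ∀ x y, dCube x y = 1 → dCube (f x) (f y) = 1

/-- Membership in the box category `□`: composites of coface maps. -/
inductive IsBox : ∀ {m n : ℕ}, CubeMap m n → Prop
  | id (n : ℕ) : IsBox (@id (Fin n → Bool))
  | coface {n : ℕ} (i : Fin (n + 1)) (a : Bool) :
      IsBox (fun x : Fin n → Bool => (i.insertNth a x : Fin (n + 1) → Bool))
  | comp {m n p : ℕ} {f : CubeMap m n} {g : CubeMap n p} :
      IsBox f → IsBox g → IsBox (g ∘ f)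

/-- Every cotransverse map `f : {0,1}^m → {0,1}^n` factors uniquely as `φ ∘ ψ`
with `ψ : {0,1}^m → {0,1}^m` cotransverse and `φ` in the box category. -/
-- helper lemmas

lemma dCube_eq_one_iff {n : ℕ} {x y : Fin n → Bool} :
    dCube x y = 1 ↔ x ≤ y ∧ (Finset.univ.filter fun i => x i ≠ y i).card = 1 := by
  unfold dCube
  split
  · rename_i h
    simp [h, Nat.cast_eq_one]
  · rename_i h
    simp only [h, false_and, iff_false]
    exact fun hc => ENNReal.top_ne_one hc

lemma diff_split {n : ℕ} {a b c : Fin n → Bool} (hab : a ≤ b) (hbc : b ≤ c) :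
    (Finset.univ.filter fun j => a j ≠ c j).card =
      (Finset.univ.filter fun j => a j ≠ b j).card +
      (Finset.univ.filter fun j => b j ≠ c j).card := by
  have hset : (Finset.univ.filter fun j => a j ≠ c j) =
      (Finset.univ.filter fun j => a j ≠ b j) ∪ (Finset.univ.filter fun j => b j ≠ c j) := by
    ext j
    have h1 := hab j
    have h2 := hbc j
    simp only [Finset.mem_filter, Finset.mem_union, Finset.mem_univ, true_and]
    revert h1 h2
    cases a j <;> cases b j <;> cases c j <;> simp
  have hdisj : Disjoint (Finset.univ.filter fun j => a j ≠ b j)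
      (Finset.univ.filter fun j => b j ≠ c j) := by
    rw [Finset.disjoint_left]
    intro j hj1 hj2
    have h1 := hab j
    have h2 := hbc j
    simp only [Finset.mem_filter, Finset.mem_univ, true_and] at hj1 hj2
    revert h1 h2 hj1 hj2
    cases a j <;> cases b j <;> cases c j <;> simp
  rw [hset, Finset.card_union_of_disjoint hdisj]

lemma cotrans_bot_top {m n : ℕ} {f : CubeMap m n} (hf : Cotransverse f) :
    f (fun _ => false) ≤ f (fun _ => true) ∧
    (Finset.univ.filter fun j => f (fun _ => false) j ≠ f (fun _ => true) j).card = m := by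
  classical
  set c : ℕ → Fin m → Bool := fun k i => decide ((i : ℕ) < k) with hc
  have hstep : ∀ k, k < m → f (c k) ≤ f (c (k + 1)) ∧
      (Finset.univ.filter fun j => f (c k) j ≠ f (c (k + 1)) j).card = 1 := by
    intro k hk
    have hd : dCube (c k) (c (k + 1)) = 1 := by
      rw [dCube_eq_one_iff]
      constructor
      · intro i
        simp only [hc]
        by_cases h : (i : ℕ) < k
        · simp [h, Nat.lt_succ_of_lt h]
        · simp [h]
      · have hs : (Finset.univ.filter fun i : Fin m => c k i ≠ c (k + 1) i)
            = {(⟨k, hk⟩ : Fin m)} := by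
          ext i
          simp only [hc, Finset.mem_filter, Finset.mem_univ, true_and,
            Finset.mem_singleton, ne_eq, decide_eq_decide, Fin.ext_iff]
          omega
        rw [hs, Finset.card_singleton]
    exact dCube_eq_one_iff.mp (hf.2 _ _ hd)
  have main : ∀ K, K ≤ m → f (c 0) ≤ f (c K) ∧
      (Finset.univ.filter fun j => f (c 0) j ≠ f (c K) j).card = K := by
    intro K
    induction K with
    | zero => intro _; simp
    | succ K ih =>
      intro hK
      obtain ⟨h1, h2⟩ := ih (Nat.le_of_succ_le hK)
      obtain ⟨h3, h4⟩ := hstep K (Nat.lt_of_succ_le hK)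
      exact ⟨h1.trans h3, by rw [diff_split h1 h3, h2, h4]⟩
  have h0 : c 0 = fun _ => false := by funext i; simp [hc]
  have hm : c m = fun _ => true := by funext i; simp [hc, i.isLt]
  have := main m le_rfl
  rw [h0, hm] at this
  exact this

lemma cotrans_endo {m : ℕ} {ψ : CubeMap m m} (h : Cotransverse ψ) :
    ψ (fun _ => false) = (fun _ => false) ∧ ψ (fun _ => true) = (fun _ => true) := by
  obtain ⟨hle, hcard⟩ := cotrans_bot_top h
  have huniv : (Finset.univ.filter fun j =>
      ψ (fun _ => false) j ≠ ψ (fun _ => true) j) = Finset.univ := by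
    apply Finset.eq_univ_of_card
    simpa using hcard
  have hall : ∀ j, ψ (fun _ => false) j ≠ ψ (fun _ => true) j := by
    intro j
    have hj : j ∈ Finset.univ.filter fun j =>
        ψ (fun _ => false) j ≠ ψ (fun _ => true) j := by
      rw [huniv]; exact Finset.mem_univ j
    exact (Finset.mem_filter.mp hj).2
  constructor <;> funext j <;>
  · have h1 := hle j
    have h2 := hall j
    revert h1 h2
    cases hb : ψ (fun _ => false) j <;> cases ht : ψ (fun _ => true) j <;> simp

-- box characterization: backward
lemma isBox_extend : ∀ (n m : ℕ) (e : Fin m → Fin n), StrictMono e →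
    ∀ b : Fin n → Bool, IsBox (fun x => Function.extend e x b) := by
  intro n
  induction n with
  | zero =>
    intro m e he b
    rcases Nat.eq_zero_or_pos m with rfl | hm
    · have : (fun x : Fin 0 → Bool => Function.extend e x b) = id := by
        funext x j
        exact j.elim0
      rw [this]
      exact IsBox.id 0
    · exact (e ⟨0, hm⟩).elim0
  | succ n ih =>
    intro m e he b
    by_cases hsurj : Function.Surjective e
    · have hm : m = n + 1 := le_antisymm
        (by simpa using Fintype.card_le_of_injective e he.injective)
        (by simpa using Fintype.card_le_of_surjective e hsurj)
      subst hm
      have hid : e = id := by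
        apply (he.range_inj strictMono_id).mp
        rw [Set.range_id, Set.range_eq_univ]
        exact hsurj
      subst hid
      have : (fun x : Fin (n+1) → Bool => Function.extend id x b) = id := by
        funext x j
        exact Function.Injective.extend_apply Function.injective_id x b j
      rw [this]
      exact IsBox.id (n+1)
    · rw [Function.Surjective] at hsurj
      push_neg at hsurj
      obtain ⟨j0, hj0⟩ := hsurj
      have hne : ∀ i, e i ≠ j0 := fun i h => hj0 i h
      have hex : ∀ i, ∃ k, j0.succAbove k = e i := fun i =>
        Fin.exists_succAbove_eq (hne i)
      choose e' he' using hex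
      have he'mono : StrictMono e' := by
        intro i i' hii
        have := he hii
        rw [← he' i, ← he' i'] at this
        exact (Fin.succAbove_lt_succAbove_iff).mp this
      have key : (fun x : Fin m → Bool => Function.extend e x b) =
          (fun y : Fin n → Bool => j0.insertNth (b j0) y) ∘
          (fun x => Function.extend e' x (fun k => b (j0.succAbove k))) := by
        funext x j
        simp only [Function.comp_apply]
        rcases eq_or_ne j j0 with rfl | hj
        · rw [Function.extend_apply' _ _ _ (fun ⟨i, hi⟩ => hne i hi),
            Fin.insertNth_apply_same]
        · obtain ⟨k, rfl⟩ := Fin.exists_succAbove_eq hj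
          rw [Fin.insertNth_apply_succAbove]
          by_cases hk : ∃ i, e' i = k
          · obtain ⟨i, rfl⟩ := hk
            rw [he' i,
              Function.Injective.extend_apply he.injective,
              Function.Injective.extend_apply he'mono.injective]
          · have hno : ¬∃ i, e i = j0.succAbove k := by
              rintro ⟨i, hi⟩
              exact hk ⟨i, Fin.succAbove_right_injective ((he' i).trans hi)⟩
            rw [Function.extend_apply' _ _ _ hk,
              Function.extend_apply' _ _ _ hno]
      rw [key]
      exact IsBox.comp (ih m e' he'mono _) (IsBox.coface j0 (b j0))

-- box characterization: forward
lemma isBox_form {m n : ℕ} {φ : CubeMap m n} (h : IsBox φ) :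
    ∃ e : Fin m → Fin n, StrictMono e ∧ ∃ b : Fin n → Bool,
      φ = fun x => Function.extend e x b := by
  induction h with
  | id n =>
    refine ⟨id, strictMono_id, fun _ => false, ?_⟩
    funext x j
    exact (Function.Injective.extend_apply Function.injective_id x _ j).symm
  | coface i a =>
    refine ⟨i.succAbove, Fin.strictMono_succAbove i, fun _ => a, ?_⟩
    funext x j
    rcases eq_or_ne j i with rfl | hj
    · rw [Fin.insertNth_apply_same,
        Function.extend_apply' _ _ _ (fun ⟨k, hk⟩ => Fin.succAbove_ne j k hk)]
    · obtain ⟨k, rfl⟩ := Fin.exists_succAbove_eq hj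
      rw [Fin.insertNth_apply_succAbove,
        Function.Injective.extend_apply (Fin.succAbove_right_injective)]
  | comp hf hg ihf ihg =>
    obtain ⟨e1, he1, b1, rfl⟩ := ihf
    obtain ⟨e2, he2, b2, rfl⟩ := ihg
    refine ⟨e2 ∘ e1, he2.comp he1, Function.extend e2 b1 b2, ?_⟩
    funext x j
    simp only [Function.comp_apply]
    by_cases hj2 : ∃ k, e2 k = j
    · obtain ⟨k, rfl⟩ := hj2
      rw [Function.Injective.extend_apply he2.injective]
      by_cases hk1 : ∃ i, e1 i = k
      · obtain ⟨i, rfl⟩ := hk1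
        rw [Function.Injective.extend_apply he1.injective]
        exact (Function.Injective.extend_apply
          (he2.injective.comp he1.injective) x _ i).symm
      · have hno : ¬∃ i, (e2 ∘ e1) i = e2 k := by
          rintro ⟨i, hi⟩
          exact hk1 ⟨i, he2.injective hi⟩
        rw [Function.extend_apply' _ _ _ hk1,
          Function.extend_apply' (f := e2 ∘ e1) _ _ _ hno,
          Function.Injective.extend_apply he2.injective]
    · have hno : ¬∃ i, (e2 ∘ e1) i = j := by
        rintro ⟨i, hi⟩
        exact hj2 ⟨e1 i, hi⟩
      rw [Function.extend_apply' _ _ _ hj2,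
        Function.extend_apply' (f := e2 ∘ e1) _ _ _ hno,
        Function.extend_apply' _ _ _ hj2]

theorem stmt9 {m n : ℕ} (f : CubeMap m n) (hf : Cotransverse f) :
    ∃! p : CubeMap m m × CubeMap m n,
      Cotransverse p.1 ∧ IsBox p.2 ∧ f = p.2 ∘ p.1 := by
  classical
  obtain ⟨hbt, hJcard⟩ := cotrans_bot_top hf
  set J : Finset (Fin n) :=
    Finset.univ.filter fun j => f (fun _ => false) j ≠ f (fun _ => true) j with hJdef
  set e : Fin m → Fin n := fun i => J.orderEmbOfFin hJcard i with hedef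
  have hemono : StrictMono e := (J.orderEmbOfFin hJcard).strictMono
  have hmem : ∀ j, j ∈ J ↔ ∃ i, e i = j := by
    intro j
    constructor
    · intro hj
      have : j ∈ Set.range (J.orderEmbOfFin hJcard) := by
        rw [Finset.range_orderEmbOfFin]
        exact hj
      obtain ⟨i, hi⟩ := this
      exact ⟨i, hi⟩
    · rintro ⟨i, rfl⟩
      exact Finset.orderEmbOfFin_mem J hJcard i
  have hconst : ∀ (x : Fin m → Bool) j, j ∉ J → f x j = f (fun _ => false) j := by
    intro x j hj
    have hjeq : f (fun _ => false) j = f (fun _ => true) j := by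
      by_contra hne
      exact hj (Finset.mem_filter.mpr ⟨Finset.mem_univ j, hne⟩)
    have h1 : f (fun _ => false) j ≤ f x j :=
      hf.1.monotone (fun i => Bool.false_le (x i)) j
    have h2 : f x j ≤ f (fun _ => true) j :=
      hf.1.monotone (fun i => Bool.le_true (x i)) j
    exact le_antisymm (hjeq ▸ h2) h1
  set ψ : CubeMap m m := fun x i => f x (e i) with hψdef
  set φ : CubeMap m n := fun y => Function.extend e y (f (fun _ => false)) with hφdef
  have hfact : f = φ ∘ ψ := by
    funext x j
    simp only [hφdef, Function.comp_apply]
    by_cases hj : ∃ i, e i = j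
    · obtain ⟨i, rfl⟩ := hj
      rw [Function.Injective.extend_apply hemono.injective]
    · rw [Function.extend_apply' _ _ _ hj]
      exact hconst x j (fun hjJ => hj ((hmem j).mp hjJ))
  have hψcot : Cotransverse ψ := by
    constructor
    · intro x y hxy
      have hf' : f x < f y := hf.1 hxy
      rw [lt_iff_le_and_ne] at hf' ⊢
      refine ⟨fun i => hf'.1 (e i), fun heq => hf'.2 ?_⟩
      funext j
      by_cases hj : ∃ i, e i = j
      · obtain ⟨i, rfl⟩ := hj
        exact congrFun heq i
      · rw [hconst x j (fun hjJ => hj ((hmem j).mp hjJ)),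
          hconst y j (fun hjJ => hj ((hmem j).mp hjJ))]
    · intro x y hd
      have hd' := hf.2 x y hd
      rw [dCube_eq_one_iff] at hd' ⊢
      obtain ⟨hle, hcard⟩ := hd'
      refine ⟨fun i => hle (e i), ?_⟩
      have himg : Finset.image e (Finset.univ.filter fun i => ψ x i ≠ ψ y i)
          = Finset.univ.filter fun j => f x j ≠ f y j := by
        ext j
        simp only [Finset.mem_image, Finset.mem_filter, Finset.mem_univ, true_and]
        constructor
        · rintro ⟨i, hi, rfl⟩
          exact hi
        · intro hne
          have hjJ : j ∈ J := by
            by_contra hj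
            exact hne ((hconst x j hj).trans (hconst y j hj).symm)
          obtain ⟨i, rfl⟩ := (hmem j).mp hjJ
          exact ⟨i, hne, rfl⟩
      rw [← hcard, ← himg, Finset.card_image_of_injective _ hemono.injective]
  refine ⟨(ψ, φ), ⟨hψcot, isBox_extend n m e hemono _, hfact⟩, ?_⟩
  rintro ⟨ψ', φ'⟩ ⟨hψ', hφ', hfact'⟩
  obtain ⟨e', he'mono, b', rfl⟩ := isBox_form hφ'
  replace hfact' : f = (fun x => Function.extend e' x b') ∘ ψ' := hfact'
  obtain ⟨hb0, hb1⟩ := cotrans_endo hψ'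
  replace hb0 : ψ' (fun _ => false) = (fun _ => false) := hb0
  replace hb1 : ψ' (fun _ => true) = (fun _ => true) := hb1
  have hfbot : ∀ j, f (fun _ => false) j = Function.extend e' (fun _ => false) b' j := by
    intro j
    rw [hfact']
    simp only [Function.comp_apply, hb0]
  have hftop : ∀ j, f (fun _ => true) j = Function.extend e' (fun _ => true) b' j := by
    intro j
    rw [hfact']
    simp only [Function.comp_apply, hb1]
  have hmem' : ∀ j, j ∈ J ↔ ∃ i, e' i = j := by
    intro j
    rw [hJdef, Finset.mem_filter]
    simp only [Finset.mem_univ, true_and, hfbot, hftop]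
    constructor
    · intro hne
      by_contra hj
      exact hne (by rw [Function.extend_apply' _ _ _ hj,
        Function.extend_apply' _ _ _ hj])
    · rintro ⟨i, rfl⟩
      rw [Function.Injective.extend_apply he'mono.injective,
        Function.Injective.extend_apply he'mono.injective]
      simp
  have he'e : e' = e := by
    have := Finset.orderEmbOfFin_unique hJcard
      (f := e') (fun i => (hmem' (e' i)).mpr ⟨i, rfl⟩) he'mono
    rw [this, hedef]
  subst he'e
  have hbout : ∀ j, ¬(∃ i, e i = j) → b' j = f (fun _ => false) j := by
    intro j hj
    rw [hfbot j, Function.extend_apply' _ _ _ hj]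
  have hφeq : (fun x => Function.extend e x b') = φ := by
    funext y j
    simp only [hφdef]
    by_cases hj : ∃ i, e i = j
    · obtain ⟨i, rfl⟩ := hj
      rw [Function.Injective.extend_apply hemono.injective,
        Function.Injective.extend_apply hemono.injective]
    · rw [Function.extend_apply' _ _ _ hj, Function.extend_apply' _ _ _ hj,
        hbout j hj]
  have hψeq : ψ' = ψ := by
    funext x i
    have h1 : f x (e i) = Function.extend e (ψ' x) b' (e i) := by
      rw [hfact']; rfl
    rw [Function.Injective.extend_apply hemono.injective] at h1
    exact h1.symm
  rw [Prod.mk.injEq]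
  exact ⟨hψeq, hφeq⟩
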